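/- For any x ∈ (P_n)^d, the earth mover's distance satisfies EMD(x) = ∑_{j=1}^{n} C(X¹_j, ..., X^d_j), where C(y) = min_{a ∈ ℝ} ∑_{i=1}^d |y_i - a| and X^i_j = x^i_1 + ... + x^i_j are the cumulative sums. -/

import Mathlib

open Finset

/-- `C(y) = min_{a ∈ ℝ} ∑ |yᵢ - a|` (the infimum is attained). -/
noncomputable def Cmin {d : ℕ} (y : Fin d → ℝ) : ℝ :=
  sInf (Set.range fun a : ℝ => ∑ i, |y i - a|)

/-- The cumulative sum `X_j = x₁ + ⋯ + x_j` of `x ∈ ℝ^{n+1}`. -/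
noncomputable def cdf {n : ℕ} (x : Fin (n + 1) → ℝ) (j : ℕ) : ℝ :=
  ∑ k : Fin (n + 1), if (k : ℕ) < j then x k else 0

/-! ### Auxiliary interval-length lemmas -/

noncomputable def len (a b : ℝ) : ℝ := max 0 (b - a)

lemma len_nonneg (a b : ℝ) : 0 ≤ len a b := le_max_left _ _

lemma lenH (c e g g' : ℝ) (h : g ≤ g') :
    len (max c g) (min e g') = max c (min e g') - max c (min e g) := by
  simp only [len, max_def, min_def]
  split_ifs <;> linarith

lemma len_split (b M m : ℝ) :
    len M m = len M (min b m) + len (max b M) m := by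
  simp only [len, max_def, min_def]
  split_ifs <;> linarith

lemma fold_max_base {ι : Type*} (s : Finset ι) (f : ι → ℝ) (a b : ℝ) :
    s.fold max (max a b) f = max a (s.fold max b f) := by
  induction s using Finset.cons_induction with
  | empty => simp
  | cons x s hx ih => simp [Finset.fold_cons, ih, max_left_comm]

lemma fold_min_base {ι : Type*} (s : Finset ι) (f : ι → ℝ) (a b : ℝ) :
    s.fold min (min a b) f = min a (s.fold min b f) := by
  induction s using Finset.cons_induction with
  | empty => simp
  | cons x s hx ih => simp [Finset.fold_cons, ih, min_left_comm]

lemma tele (φ : ℕ → ℝ) {a b : ℕ} (h : a ≤ b) :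
    ∑ k ∈ Finset.Ico a b, (φ (k+1) - φ k) = φ b - φ a := by
  rw [Finset.sum_Ico_eq_sub _ h, Finset.sum_range_sub, Finset.sum_range_sub]; ring

lemma oneD (n : ℕ) (G : ℕ → ℝ) (hm : Monotone G) (c e : ℝ) (hc : G 0 ≤ c) (he : e ≤ G (n+1)) :
    ∑ j : Fin (n+1), len (max c (G j)) (min e (G ((j:ℕ)+1))) = len c e := by
  have h1 : ∀ j : Fin (n+1), len (max c (G j)) (min e (G ((j:ℕ)+1))) =
      (fun k : ℕ => max c (min e (G k))) ((j:ℕ)+1) - (fun k : ℕ => max c (min e (G k))) (j:ℕ) :=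
    fun j => lenH c e _ _ (hm (Nat.le_succ _))
  rw [Finset.sum_congr rfl (fun j _ => h1 j),
    Fin.sum_univ_eq_sum_range (fun k : ℕ => (fun k : ℕ => max c (min e (G k))) (k+1) - (fun k : ℕ => max c (min e (G k))) k) (n+1),
    Finset.sum_range_sub (fun k : ℕ => max c (min e (G k)))]
  have h2 : min e (G (n+1)) = e := min_eq_left he
  have h3 : max c (min e (G 0)) = c := max_eq_left (le_trans (min_le_right _ _) hc)
  simp only [h2, h3, len, max_def]
  split_ifs <;> linarith

/-! ### Partition lemma for the comonotone coupling -/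

lemma fiberSum (d n : ℕ) (G : Fin (d+1) → ℕ → ℝ) (i0 : Fin (d+1)) (j0 : Fin (n+1)) (c e : ℝ) :
    ∑ y ∈ univ.filter (fun y : Fin (d+1) → Fin (n+1) => y i0 = j0),
      len (univ.fold max c fun i => G i (y i)) (univ.fold min e fun i => G i ((y i:ℕ)+1)) =
    ∑ z : Fin d → Fin (n+1),
      len (univ.fold max (max c (G i0 (j0:ℕ))) fun k => G (i0.succAbove k) ((z k : ℕ)))
          (univ.fold min (min e (G i0 ((j0:ℕ)+1))) fun k => G (i0.succAbove k) ((z k:ℕ)+1)) := by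
  refine Finset.sum_bij' (fun y _ => i0.removeNth y) (fun z _ => i0.insertNth j0 z) ?hi ?hj ?li ?ri ?h
  case hi => intro y hy; exact mem_univ _
  case hj => intro z hz; simp
  case li =>
    intro y hy
    rw [mem_filter] at hy
    have h2 := hy.2
    subst h2
    exact Fin.insertNth_self_removeNth i0 y
  case ri => intro z hz; exact Fin.removeNth_insertNth _ _ _
  case h =>
    intro y hy
    rw [mem_filter] at hy
    have hmax : (univ.fold max c fun i => G i ((y i : ℕ))) =
        univ.fold max (max c (G i0 (j0:ℕ))) (fun k => G (i0.succAbove k) ((i0.removeNth y k : ℕ))) := by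
      rw [Fin.univ_succAbove _ i0, Finset.fold_cons, Finset.fold_map, hy.2, max_comm c, ← fold_max_base]
      rfl
    have hmin : (univ.fold min e fun i => G i ((y i : ℕ)+1)) =
        univ.fold min (min e (G i0 ((j0:ℕ)+1))) (fun k => G (i0.succAbove k) ((i0.removeNth y k : ℕ)+1)) := by
      rw [Fin.univ_succAbove _ i0, Finset.fold_cons, Finset.fold_map, hy.2, min_comm e, ← fold_min_base]
      rfl
    rw [hmax, hmin]

lemma keyR : ∀ (d n : ℕ) (G : Fin d → ℕ → ℝ), (∀ i, Monotone (G i)) →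
    ∀ (c e : ℝ), (∀ i, G i 0 ≤ c) → (∀ i, e ≤ G i (n+1)) →
    ∑ y : Fin d → Fin (n+1),
      len (univ.fold max c fun i => G i ((y i : ℕ))) (univ.fold min e fun i => G i ((y i : ℕ)+1)) = len c e := by
  intro d
  induction d with
  | zero =>
    intro n G _ c e _ _
    rw [Fintype.sum_unique]
    simp
  | succ d ih =>
    intro n G hG c e hc he
    rw [← Finset.sum_fiberwise univ (fun y : Fin (d+1) → Fin (n+1) => y 0)
      (fun y => len (univ.fold max c fun i => G i ((y i : ℕ))) (univ.fold min e fun i => G i ((y i : ℕ)+1)))]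
    have inner : ∀ j0 : Fin (n+1),
        (∑ y ∈ univ.filter (fun y : Fin (d+1) → Fin (n+1) => y 0 = j0),
          len (univ.fold max c fun i => G i ((y i:ℕ))) (univ.fold min e fun i => G i ((y i:ℕ)+1))) =
        len (max c (G 0 (j0:ℕ))) (min e (G 0 ((j0:ℕ)+1))) := by
      intro j0
      rw [fiberSum d n G 0 j0 c e]
      exact ih n (fun k => G ((0:Fin (d+1)).succAbove k)) (fun k => hG _) _ _
        (fun k => le_trans (hc _) (le_max_left _ _))
        (fun k => le_trans (min_le_left _ _) (he _))
    rw [Finset.sum_congr rfl (fun j0 _ => inner j0)]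
    exact oneD n (G 0) (hG 0) c e (hc 0) (he 0)

lemma keyM (d n : ℕ) (G : Fin (d+1) → ℕ → ℝ) (hG : ∀ i, Monotone (G i))
    (i0 : Fin (d+1)) (j0 : Fin (n+1)) (c e : ℝ) (hc : ∀ i, G i 0 ≤ c) (he : ∀ i, e ≤ G i (n+1)) :
    ∑ y ∈ univ.filter (fun y : Fin (d+1) → Fin (n+1) => y i0 = j0),
      len (univ.fold max c fun i => G i ((y i : ℕ))) (univ.fold min e fun i => G i ((y i:ℕ)+1)) =
    len (max c (G i0 (j0:ℕ))) (min e (G i0 ((j0:ℕ)+1))) := by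
  rw [fiberSum d n G i0 j0 c e]
  exact keyR d n (fun k => G (i0.succAbove k)) (fun k => hG _) _ _
    (fun k => le_trans (hc _) (le_max_left _ _))
    (fun k => le_trans (min_le_left _ _) (he _))

/-! ### cdf lemmas -/

section cdfsec
variable {n : ℕ} {x : Fin (n+1) → ℝ} (hx0 : ∀ k, 0 ≤ x k) (hx1 : ∑ k, x k = 1)

lemma cdf_zero : cdf x 0 = 0 := by simp [cdf]

lemma cdf_succ (j : Fin (n+1)) : cdf x ((j:ℕ)+1) = cdf x (j:ℕ) + x j := by
  unfold cdf
  have hxj : x j = ∑ k : Fin (n+1), if k = j then x k else 0 := by simp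
  rw [hxj, ← Finset.sum_add_distrib]
  apply Finset.sum_congr rfl
  intro k _
  rcases eq_or_ne k j with rfl | hk
  · simp
  · have : (k:ℕ) ≠ (j:ℕ) := fun h => hk (Fin.ext h)
    have h2 : ((k:ℕ) < (j:ℕ)+1) ↔ (k:ℕ) < (j:ℕ) := by omega
    simp [hk, h2]

include hx0 in
lemma cdf_mono : Monotone (cdf x) := by
  intro a b hab
  apply Finset.sum_le_sum
  intro k _
  split_ifs with h1 h2 h2 <;> first | rfl | exact hx0 k | omega

include hx0 in
lemma cdf_nonneg (j : ℕ) : 0 ≤ cdf x j := by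
  apply Finset.sum_nonneg; intro k _; split_ifs; exacts [hx0 k, le_refl _]

include hx0 hx1 in
lemma cdf_le_one (j : ℕ) : cdf x j ≤ 1 := by
  rw [← hx1]; apply Finset.sum_le_sum; intro k _; split_ifs; exacts [le_refl _, hx0 k]

include hx1 in
lemma cdf_full (j : ℕ) (h : n+1 ≤ j) : cdf x j = 1 := by
  rw [← hx1]; apply Finset.sum_congr rfl; intro k _
  have : (k:ℕ) < j := lt_of_lt_of_le k.2 h
  simp [this]
end cdfsec

/-! ### Cmin lemmas -/

section cminlem
variable {d : ℕ}

lemma Cmin_le (v : Fin d → ℝ) (a : ℝ) : Cmin v ≤ ∑ i, |v i - a| :=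
  csInf_le ⟨0, by rintro r ⟨b, rfl⟩; positivity⟩ ⟨a, rfl⟩

lemma le_Cmin (v : Fin d → ℝ) {c : ℝ} (h : ∀ a, c ≤ ∑ i, |v i - a|) : c ≤ Cmin v :=
  le_csInf (Set.range_nonempty _) (by rintro r ⟨a, rfl⟩; exact h a)

lemma Cmin_add_le (v w : Fin d → ℝ) : Cmin (v + w) ≤ Cmin v + Cmin w := by
  have key : ∀ a b : ℝ, Cmin (v + w) ≤ (∑ i, |v i - a|) + ∑ i, |w i - b| := by
    intro a b
    calc Cmin (v + w) ≤ ∑ i, |(v + w) i - (a + b)| := Cmin_le _ _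
      _ ≤ ∑ i, (|v i - a| + |w i - b|) := by
          apply Finset.sum_le_sum; intro i _
          have h : (v + w) i - (a + b) = (v i - a) + (w i - b) := by
            simp only [Pi.add_apply]; ring
          rw [h]; exact abs_add_le _ _
      _ = (∑ i, |v i - a|) + ∑ i, |w i - b| := Finset.sum_add_distrib
  have h1 : ∀ a, Cmin (v + w) - (∑ i, |v i - a|) ≤ Cmin w :=
    fun a => le_Cmin w (fun b => by linarith [key a b])
  have h2 : Cmin (v + w) - Cmin w ≤ Cmin v :=
    le_Cmin v (fun a => by linarith [h1 a])
  linarith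

lemma Cmin_smul_le (t : ℝ) (ht : 0 ≤ t) (v : Fin d → ℝ) : Cmin (t • v) ≤ t * Cmin v := by
  rcases eq_or_lt_of_le ht with rfl | ht'
  · have : Cmin ((0:ℝ) • v) ≤ 0 := by
      have := Cmin_le ((0:ℝ) • v) 0
      simpa using this
    simpa using this
  · rw [← div_le_iff₀' ht']
    apply le_Cmin
    intro a
    rw [div_le_iff₀' ht']
    calc Cmin (t • v) ≤ ∑ i, |(t • v) i - t * a| := Cmin_le _ _
      _ = t * ∑ i, |v i - a| := by
          rw [Finset.mul_sum]
          apply Finset.sum_congr rfl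
          intro i _
          rw [Pi.smul_apply, smul_eq_mul, ← mul_sub, abs_mul, abs_of_pos ht']

lemma Cmin_sum_le {ι : Type*} (s : Finset ι) (v : ι → Fin d → ℝ) :
    Cmin (∑ k ∈ s, v k) ≤ ∑ k ∈ s, Cmin (v k) := by
  induction s using Finset.cons_induction with
  | empty => simpa using Cmin_le (0 : Fin d → ℝ) 0
  | cons a s ha ih =>
    rw [Finset.sum_cons, Finset.sum_cons]
    exact le_trans (Cmin_add_le _ _) (by linarith)

lemma Cmin_reflect_le (c : ℝ) (v : Fin d → ℝ) : Cmin (fun i => c - v i) ≤ Cmin v := by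
  apply le_Cmin
  intro a
  calc Cmin (fun i => c - v i) ≤ ∑ i, |(c - v i) - (c - a)| := Cmin_le _ _
    _ = ∑ i, |v i - a| := by apply Finset.sum_congr rfl; intro i _; rw [abs_sub_comm]; ring_nf

end cminlem

/-! ### clamp lemmas -/

noncomputable def cl (s : ℝ) : ℝ := max 0 (min 1 s)

lemma cl_mono : Monotone cl := fun a b hab =>
  max_le_max (le_refl _) (min_le_min (le_refl _) hab)

lemma cl_decompose (s : ℝ) : cl s = max 0 s - max 0 (s - 1) := by
  simp only [cl, max_def, min_def]; split_ifs <;> linarith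

lemma cl_of_one_le {t : ℝ} (h : 1 ≤ t) : cl t = 1 := by
  simp only [cl, max_def, min_def]; split_ifs <;> linarith

lemma cl_of_nonpos {t : ℝ} (h : t ≤ 0) : cl t = 0 := by
  simp only [cl, max_def, min_def]; split_ifs <;> linarith

lemma cl_of_mem {t : ℝ} (h0 : 0 ≤ t) (h1 : t ≤ 1) : cl t = t := by
  simp only [cl, max_def, min_def]; split_ifs <;> linarith

lemma sum_cl_le (n : ℕ) (a b : ℝ) (hab : a ≤ b) :
    ∑ j ∈ Icc 1 n, (cl ((j:ℝ)+1-a) - cl ((j:ℝ)+1-b)) ≤ b - a := by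
  have h1 : ∀ j : ℕ, cl ((j:ℝ)+1-a) - cl ((j:ℝ)+1-b) =
      (fun k : ℕ => max 0 ((k:ℝ)-a) - max 0 ((k:ℝ)-b)) (j+1) - (fun k : ℕ => max 0 ((k:ℝ)-a) - max 0 ((k:ℝ)-b)) j := by
    intro j
    simp only [cl_decompose]
    push_cast
    ring_nf
  rw [Finset.sum_congr rfl (fun j _ => h1 j)]
  have : Icc 1 n = Ico 1 (n+1) := by rw [Finset.Ico_add_one_right_eq_Icc]
  rw [this]
  have htel : ∑ j ∈ Ico 1 (n+1), ((fun k : ℕ => max 0 ((k:ℝ)-a) - max 0 ((k:ℝ)-b)) (j+1) - (fun k : ℕ => max 0 ((k:ℝ)-a) - max 0 ((k:ℝ)-b)) j) = (fun k : ℕ => max 0 ((k:ℝ)-a) - max 0 ((k:ℝ)-b)) (n+1) - (fun k : ℕ => max 0 ((k:ℝ)-a) - max 0 ((k:ℝ)-b)) 1 := by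
    rw [Finset.sum_Ico_eq_sub _ (by omega),
      Finset.sum_range_sub (fun k : ℕ => max 0 ((k:ℝ)-a) - max 0 ((k:ℝ)-b)),
      Finset.sum_range_sub (fun k : ℕ => max 0 ((k:ℝ)-a) - max 0 ((k:ℝ)-b))]
    ring
  rw [htel]
  simp only [max_def]
  split_ifs <;> push_cast at * <;> linarith

lemma sum_abs_cl (n : ℕ) (s t : ℝ) :
    ∑ j ∈ Icc 1 n, |cl ((j:ℝ)+1-s) - cl ((j:ℝ)+1-t)| ≤ |s - t| := by
  rcases le_total t s with h | h
  · calc ∑ j ∈ Icc 1 n, |cl ((j:ℝ)+1-s) - cl ((j:ℝ)+1-t)|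
        = ∑ j ∈ Icc 1 n, (cl ((j:ℝ)+1-t) - cl ((j:ℝ)+1-s)) := by
          apply Finset.sum_congr rfl; intro j _
          rw [abs_sub_comm, abs_of_nonneg (by simp only [sub_nonneg]; exact cl_mono (by linarith))]
      _ ≤ s - t := sum_cl_le n t s h
      _ ≤ |s - t| := by rw [abs_of_nonneg (by linarith)]
  · calc ∑ j ∈ Icc 1 n, |cl ((j:ℝ)+1-s) - cl ((j:ℝ)+1-t)|
        = ∑ j ∈ Icc 1 n, (cl ((j:ℝ)+1-s) - cl ((j:ℝ)+1-t)) := by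
          apply Finset.sum_congr rfl; intro j _
          rw [abs_of_nonneg (by simp only [sub_nonneg]; exact cl_mono (by linarith))]
      _ ≤ t - s := sum_cl_le n s t h
      _ ≤ |s - t| := by rw [abs_sub_comm, abs_of_nonneg (by linarith)]

lemma abs_sub_cl_le (F a : ℝ) (h0 : 0 ≤ F) (h1 : F ≤ 1) : |F - cl a| ≤ |F - a| := by
  rcases le_total a 0 with h | h
  · rw [cl_of_nonpos h, sub_zero, abs_of_nonneg h0]
    have := le_abs_self (F - a); linarith
  · rcases le_total 1 a with h' | h'
    · rw [cl_of_one_le h', abs_of_nonpos (by linarith)]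
      have := neg_abs_le (F - a); linarith
    · rw [cl_of_mem h h']

/-! ### indicator vectors -/

noncomputable def indf (n d j : ℕ) (y : Fin d → Fin (n+1)) : Fin d → ℝ :=
  fun i => if (y i : ℕ) < j then 1 else 0

lemma indf_eq_cl {n d : ℕ} (j : ℕ) (y : Fin d → Fin (n+1)) (i : Fin d) :
    indf n d j y i = cl ((j:ℝ)+1-(((y i : ℕ):ℝ)+1)) := by
  unfold indf
  split_ifs with h
  · rw [cl_of_one_le]
    have : ((y i : ℕ):ℝ) + 1 ≤ (j:ℝ) := by exact_mod_cast Nat.succ_le_of_lt h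
    linarith
  · rw [cl_of_nonpos]
    have : (j:ℝ) ≤ ((y i : ℕ):ℝ) := by exact_mod_cast Nat.le_of_not_lt h
    linarith

lemma cost_le (n d : ℕ) (y : Fin d → Fin (n+1)) :
    Cmin (fun i => (((y i : ℕ):ℝ)+1)) ≤ ∑ j ∈ Icc 1 n, Cmin (indf n d j y) := by
  have hsum : ∀ i, (∑ j ∈ Icc 1 n, indf n d j y) i = (n:ℝ) - ((y i : ℕ):ℝ) := by
    intro i
    rw [Finset.sum_apply]
    have h1 : ∑ j ∈ Icc 1 n, indf n d j y i = ((Icc 1 n).filter (fun j => (y i : ℕ) < j)).card := by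
      unfold indf
      rw [Finset.sum_boole]
    have h2 : (Icc 1 n).filter (fun j => (y i : ℕ) < j) = Icc ((y i : ℕ)+1) n := by
      ext k; simp only [mem_filter, mem_Icc]; omega
    have h3 : (y i : ℕ) ≤ n := Nat.lt_succ_iff.1 (y i).2
    rw [h1, h2, Nat.card_Icc]
    have : n + 1 - ((y i : ℕ)+1) = n - (y i : ℕ) := by omega
    rw [this, Nat.cast_sub h3]
  have hrepr : (fun i : Fin d => (((y i : ℕ):ℝ)+1)) =
      fun i => ((n:ℝ)+1) - (∑ j ∈ Icc 1 n, indf n d j y) i := by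
    funext i; rw [hsum i]; ring
  rw [hrepr]
  exact le_trans (Cmin_reflect_le _ _) (Cmin_sum_le _ _)

lemma cost_ge (n d : ℕ) (y : Fin d → Fin (n+1)) :
    ∑ j ∈ Icc 1 n, Cmin (indf n d j y) ≤ Cmin (fun i => (((y i : ℕ):ℝ)+1)) := by
  apply le_Cmin
  intro a
  calc ∑ j ∈ Icc 1 n, Cmin (indf n d j y)
      ≤ ∑ j ∈ Icc 1 n, ∑ i, |indf n d j y i - cl ((j:ℝ)+1-a)| :=
        Finset.sum_le_sum (fun j _ => Cmin_le _ _)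
    _ = ∑ i, ∑ j ∈ Icc 1 n, |cl ((j:ℝ)+1-(((y i : ℕ):ℝ)+1)) - cl ((j:ℝ)+1-a)| := by
        rw [Finset.sum_comm]
        exact Finset.sum_congr rfl (fun i _ => Finset.sum_congr rfl
          (fun j _ => by rw [indf_eq_cl]))
    _ ≤ ∑ i, |(((y i : ℕ):ℝ)+1) - a| :=
        Finset.sum_le_sum (fun i _ => sum_abs_cl n _ a)

lemma sum_fiber_comp {D n : ℕ} (f : (Fin D → Fin (n+1)) → ℝ) (i : Fin D)
    (P : Fin (n+1) → Prop) [DecidablePred P] :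
    ∑ y ∈ univ.filter (fun y : Fin D → Fin (n+1) => P (y i)), f y =
    ∑ j' ∈ univ.filter P, ∑ y ∈ univ.filter (fun y : Fin D → Fin (n+1) => y i = j'), f y := by
  rw [← Finset.sum_fiberwise (univ.filter (fun y : Fin D → Fin (n+1) => P (y i)))
    (fun y => y i) f]
  have hfib : ∀ j' : Fin (n+1),
      (univ.filter (fun y : Fin D → Fin (n+1) => P (y i))).filter (fun y => y i = j') =
      if P j' then univ.filter (fun y : Fin D → Fin (n+1) => y i = j') else ∅ := by
    intro j'
    split_ifs with hP
    · ext y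
      simp only [mem_filter, mem_univ, true_and, Finset.filter_filter]
      constructor
      · rintro ⟨_, h⟩; exact h
      · intro h; exact ⟨h ▸ hP, h⟩
    · ext y
      simp only [mem_filter, mem_univ, true_and, Finset.filter_filter, Finset.notMem_empty,
        iff_false, not_and]
      intro hPy hyi; exact hP (hyi ▸ hPy)
  calc ∑ j' : Fin (n+1), ∑ y ∈ (univ.filter (fun y : Fin D → Fin (n+1) => P (y i))).filter
        (fun y => y i = j'), f y
      = ∑ j' : Fin (n+1), if P j' then ∑ y ∈ univ.filter
          (fun y : Fin D → Fin (n+1) => y i = j'), f y else 0 := by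
        apply Finset.sum_congr rfl
        intro j' _
        rw [hfib j']
        split_ifs <;> simp
    _ = ∑ j' ∈ univ.filter P, ∑ y ∈ univ.filter
          (fun y : Fin D → Fin (n+1) => y i = j'), f y := by rw [Finset.sum_filter]

lemma finfilter_sum (n : ℕ) (p : ℕ → Prop) [DecidablePred p] (g : ℕ → ℝ) :
    ∑ j' ∈ univ.filter (fun j' : Fin (n+1) => p (j':ℕ)), g (j':ℕ) =
    ∑ k ∈ (range (n+1)).filter p, g k := by
  rw [Finset.sum_filter, Finset.sum_filter,
    Fin.sum_univ_eq_sum_range (fun k => if p k then g k else 0)]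

/-! ### the comonotone coupling -/

noncomputable def Tstar (n d' : ℕ) (x : Fin (d'+1) → Fin (n+1) → ℝ) :
    (Fin (d'+1) → Fin (n+1)) → ℝ :=
  fun y => len (univ.fold max 0 fun i => cdf (x i) ((y i : ℕ)))
    (univ.fold min 1 fun i => cdf (x i) ((y i : ℕ)+1))

lemma Tstar_nonneg (n d' : ℕ) (x : Fin (d'+1) → Fin (n+1) → ℝ) (y : Fin (d'+1) → Fin (n+1)) :
    0 ≤ Tstar n d' x y := len_nonneg _ _

lemma Tstar_marg (n d' : ℕ) (x : Fin (d'+1) → Fin (n+1) → ℝ)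
    (hx0 : ∀ i k, 0 ≤ x i k) (hx1 : ∀ i, ∑ k, x i k = 1)
    (i0 : Fin (d'+1)) (j0 : Fin (n+1)) :
    ∑ y ∈ univ.filter (fun y : Fin (d'+1) → Fin (n+1) => y i0 = j0), Tstar n d' x y = x i0 j0 := by
  unfold Tstar
  rw [keyM d' n (fun i k => cdf (x i) k) (fun i => cdf_mono (hx0 i)) i0 j0 0 1
    (fun i => le_of_eq cdf_zero) (fun i => le_of_eq (cdf_full (hx1 i) (n+1) le_rfl).symm)]
  have hnn := cdf_nonneg (hx0 i0) (j0:ℕ)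
  have hle := cdf_le_one (hx0 i0) (hx1 i0) ((j0:ℕ)+1)
  have hstep := cdf_succ (x := x i0) j0
  have hmon : cdf (x i0) (j0:ℕ) ≤ cdf (x i0) ((j0:ℕ)+1) := cdf_mono (hx0 i0) (Nat.le_succ _)
  rw [max_eq_right hnn, min_eq_right hle]
  simp only [len]
  rw [max_eq_right (by linarith)]
  linarith

/-! ### per-threshold cost of the coupling -/

lemma costJ (n d' : ℕ) (x : Fin (d'+1) → Fin (n+1) → ℝ)
    (hx0 : ∀ i k, 0 ≤ x i k) (hx1 : ∀ i, ∑ k, x i k = 1) (j : ℕ) (hj : j ≤ n) :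
    ∑ y : Fin (d'+1) → Fin (n+1), Cmin (indf n (d'+1) j y) * Tstar n d' x y
      ≤ Cmin (fun i => cdf (x i) j) := by
  have hFmono : ∀ i : Fin (d'+1), Monotone (cdf (x i)) := fun i => cdf_mono (hx0 i)
  have hF0 : ∀ i : Fin (d'+1), cdf (x i) 0 = 0 := fun i => cdf_zero
  have hF1 : ∀ i : Fin (d'+1), cdf (x i) (n+1) = 1 := fun i => cdf_full (hx1 i) (n+1) le_rfl
  have hFnn : ∀ (i : Fin (d'+1)) j', 0 ≤ cdf (x i) j' := fun i j' => cdf_nonneg (hx0 i) j'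
  have hFle : ∀ (i : Fin (d'+1)) j', cdf (x i) j' ≤ 1 := fun i j' => cdf_le_one (hx0 i) (hx1 i) j'
  apply le_Cmin
  intro a
  set b := cl a with hbdef
  have hb0 : 0 ≤ b := le_max_left _ _
  have hb1 : b ≤ 1 := max_le zero_le_one (min_le_left _ _)
  set L : (Fin (d'+1) → Fin (n+1)) → ℝ := fun y =>
    len (univ.fold max 0 fun i => cdf (x i) ((y i : ℕ)))
      (univ.fold min b fun i => cdf (x i) ((y i : ℕ)+1)) with hL
  set R : (Fin (d'+1) → Fin (n+1)) → ℝ := fun y =>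
    len (univ.fold max b fun i => cdf (x i) ((y i : ℕ)))
      (univ.fold min 1 fun i => cdf (x i) ((y i : ℕ)+1)) with hR
  have hsplit : ∀ y, Tstar n d' x y = L y + R y := by
    intro y
    have e1 : (univ.fold min b fun i => cdf (x i) ((y i:ℕ)+1)) =
        min b (univ.fold min 1 fun i => cdf (x i) ((y i:ℕ)+1)) := by
      rw [← fold_min_base, min_eq_left hb1]
    have e2 : (univ.fold max b fun i => cdf (x i) ((y i:ℕ))) =
        max b (univ.fold max 0 fun i => cdf (x i) ((y i:ℕ))) := by
      rw [← fold_max_base, max_eq_left hb0]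
    rw [hL, hR]
    dsimp only
    rw [e1, e2]
    exact len_split b _ _
  have hLnn : ∀ y, 0 ≤ L y := fun y => len_nonneg _ _
  have hRnn : ∀ y, 0 ≤ R y := fun y => len_nonneg _ _
  have hpt : ∀ y : Fin (d'+1) → Fin (n+1), Cmin (indf n (d'+1) j y) * (L y + R y) ≤
      ∑ i, ((if (y i:ℕ) < j then 0 else 1) * L y + (if (y i:ℕ) < j then (1:ℝ) else 0) * R y) := by
    intro y
    have hA : Cmin (indf n (d'+1) j y) ≤ ∑ i, (if (y i:ℕ) < j then (1:ℝ) else 0) := by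
      refine le_trans (Cmin_le (indf n (d'+1) j y) 0)
        (le_of_eq (Finset.sum_congr rfl (fun i _ => ?_)))
      unfold indf; split_ifs <;> simp
    have hB : Cmin (indf n (d'+1) j y) ≤ ∑ i, (if (y i:ℕ) < j then (0:ℝ) else 1) := by
      refine le_trans (Cmin_le (indf n (d'+1) j y) 1)
        (le_of_eq (Finset.sum_congr rfl (fun i _ => ?_)))
      unfold indf; split_ifs <;> simp
    calc Cmin (indf n (d'+1) j y) * (L y + R y)
        = Cmin (indf n (d'+1) j y) * L y + Cmin (indf n (d'+1) j y) * R y := by ring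
      _ ≤ (∑ i, (if (y i:ℕ) < j then (0:ℝ) else 1)) * L y
            + (∑ i, (if (y i:ℕ) < j then (1:ℝ) else 0)) * R y :=
          add_le_add (mul_le_mul_of_nonneg_right hB (hLnn y))
            (mul_le_mul_of_nonneg_right hA (hRnn y))
      _ = ∑ i, ((if (y i:ℕ) < j then 0 else 1) * L y + (if (y i:ℕ) < j then (1:ℝ) else 0) * R y) := by
          rw [Finset.sum_add_distrib, ← Finset.sum_mul, ← Finset.sum_mul]
  have hfiberL : ∀ i : Fin (d'+1),
      ∑ y ∈ univ.filter (fun y : Fin (d'+1) → Fin (n+1) => ¬ ((y i:ℕ) < j)), L y =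
      b - min b (cdf (x i) j) := by
    intro i
    rw [sum_fiber_comp L i (fun j' => ¬ ((j':ℕ) < j))]
    have hinner : ∀ j' : Fin (n+1),
        ∑ y ∈ univ.filter (fun y : Fin (d'+1) → Fin (n+1) => y i = j'), L y
        = (fun k : ℕ => max 0 (min b (cdf (x i) k))) ((j':ℕ)+1)
          - (fun k : ℕ => max 0 (min b (cdf (x i) k))) (j':ℕ) := by
      intro j'
      rw [hL]
      dsimp only
      rw [keyM d' n (fun i' k => cdf (x i') k) hFmono i j' 0 b
        (fun i' => le_of_eq (hF0 i')) (fun i' => le_trans hb1 (le_of_eq (hF1 i').symm))]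
      exact lenH 0 b _ _ (hFmono i (Nat.le_succ _))
    rw [Finset.sum_congr rfl (fun j' _ => hinner j'),
      finfilter_sum n (fun k => ¬ (k < j))
        (fun k => (fun k : ℕ => max 0 (min b (cdf (x i) k))) (k+1)
          - (fun k : ℕ => max 0 (min b (cdf (x i) k))) k)]
    have hIco : (range (n+1)).filter (fun k => ¬ (k < j)) = Ico j (n+1) := by
      ext k; simp only [mem_filter, mem_range, mem_Ico, not_lt]; omega
    rw [hIco, tele (fun k : ℕ => max 0 (min b (cdf (x i) k))) (show j ≤ n+1 by omega)]
    have h1 : max 0 (min b (cdf (x i) (n+1))) = b := by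
      rw [hF1 i, min_eq_left hb1, max_eq_right hb0]
    have h2 : max 0 (min b (cdf (x i) j)) = min b (cdf (x i) j) :=
      max_eq_right (le_min hb0 (hFnn i j))
    simp only [h1, h2]
  have hfiberR : ∀ i : Fin (d'+1),
      ∑ y ∈ univ.filter (fun y : Fin (d'+1) → Fin (n+1) => (y i:ℕ) < j), R y =
      max b (cdf (x i) j) - b := by
    intro i
    rw [sum_fiber_comp R i (fun j' => (j':ℕ) < j)]
    have hinner : ∀ j' : Fin (n+1),
        ∑ y ∈ univ.filter (fun y : Fin (d'+1) → Fin (n+1) => y i = j'), R y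
        = (fun k : ℕ => max b (min 1 (cdf (x i) k))) ((j':ℕ)+1)
          - (fun k : ℕ => max b (min 1 (cdf (x i) k))) (j':ℕ) := by
      intro j'
      rw [hR]
      dsimp only
      rw [keyM d' n (fun i' k => cdf (x i') k) hFmono i j' b 1
        (fun i' => le_trans (le_of_eq (hF0 i')) hb0) (fun i' => le_of_eq (hF1 i').symm)]
      exact lenH b 1 _ _ (hFmono i (Nat.le_succ _))
    rw [Finset.sum_congr rfl (fun j' _ => hinner j'),
      finfilter_sum n (fun k => k < j)
        (fun k => (fun k : ℕ => max b (min 1 (cdf (x i) k))) (k+1)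
          - (fun k : ℕ => max b (min 1 (cdf (x i) k))) k)]
    have hIco : (range (n+1)).filter (fun k => k < j) = Ico 0 j := by
      ext k; simp only [mem_filter, mem_range, mem_Ico]; omega
    rw [hIco, tele (fun k : ℕ => max b (min 1 (cdf (x i) k))) (show 0 ≤ j by omega)]
    have h1 : max b (min 1 (cdf (x i) j)) = max b (cdf (x i) j) := by
      rw [min_eq_right (hFle i j)]
    have h2 : max b (min 1 (cdf (x i) 0)) = b := by
      rw [hF0 i, min_eq_right zero_le_one, max_eq_left hb0]
    simp only [h1, h2]
  calc ∑ y : Fin (d'+1) → Fin (n+1), Cmin (indf n (d'+1) j y) * Tstar n d' x y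
      = ∑ y : Fin (d'+1) → Fin (n+1), Cmin (indf n (d'+1) j y) * (L y + R y) :=
        Finset.sum_congr rfl (fun y _ => by rw [hsplit y])
    _ ≤ ∑ y : Fin (d'+1) → Fin (n+1),
          ∑ i, ((if (y i:ℕ) < j then 0 else 1) * L y + (if (y i:ℕ) < j then (1:ℝ) else 0) * R y) :=
        Finset.sum_le_sum (fun y _ => hpt y)
    _ = ∑ i : Fin (d'+1), ∑ y : Fin (d'+1) → Fin (n+1),
          ((if (y i:ℕ) < j then 0 else 1) * L y + (if (y i:ℕ) < j then (1:ℝ) else 0) * R y) :=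
        Finset.sum_comm
    _ = ∑ i : Fin (d'+1),
          ((∑ y ∈ univ.filter (fun y : Fin (d'+1) → Fin (n+1) => ¬ ((y i:ℕ) < j)), L y)
            + (∑ y ∈ univ.filter (fun y : Fin (d'+1) → Fin (n+1) => (y i:ℕ) < j), R y)) := by
        apply Finset.sum_congr rfl
        intro i _
        rw [Finset.sum_add_distrib]
        congr 1
        · rw [Finset.sum_filter]
          apply Finset.sum_congr rfl
          intro y _
          split_ifs <;> ring
        · rw [Finset.sum_filter]
          apply Finset.sum_congr rfl
          intro y _
          split_ifs <;> ring
    _ = ∑ i : Fin (d'+1), |cdf (x i) j - b| := by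
        apply Finset.sum_congr rfl
        intro i _
        rw [hfiberL i, hfiberR i]
        have := max_sub_min_eq_abs b (cdf (x i) j)
        linarith
    _ ≤ ∑ i : Fin (d'+1), |cdf (x i) j - a| :=
        Finset.sum_le_sum (fun i _ => abs_sub_cl_le _ a (hFnn i j) (hFle i j))

/-- The generalized EMD — i.e. the minimum of `∑_y C(y) T(y)` over all nonnegative
transport plans `T` with margins `x¹, …, x^d` (here the ground set `{1,…,n+1}` is
indexed by `Fin (n+1)`, the point of index `y i` being `(y i) + 1`) — equals
`∑_{j=1}^{n} C(X¹_j, …, X^d_j)`. -/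
theorem stmt10 (n d : ℕ) (hn : 1 ≤ n) (hd : 2 ≤ d) (x : Fin d → Fin (n + 1) → ℝ)
    (hx : ∀ i, (∀ k, 0 ≤ x i k) ∧ ∑ k, x i k = 1) :
    IsLeast { s : ℝ | ∃ T : (Fin d → Fin (n + 1)) → ℝ,
        (∀ y, 0 ≤ T y) ∧
        (∀ (i : Fin d) (j : Fin (n + 1)),
          ∑ y ∈ Finset.univ.filter (fun y : Fin d → Fin (n + 1) => y i = j), T y = x i j) ∧
        s = ∑ y : Fin d → Fin (n + 1), Cmin (fun i => ((y i : ℕ) + 1 : ℝ)) * T y }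
      (∑ j ∈ Finset.Icc 1 n, Cmin (fun i => cdf (x i) j)) := by
  obtain ⟨d', rfl⟩ : ∃ d', d = d' + 1 := ⟨d - 1, by omega⟩
  have hx0 : ∀ i, ∀ k, 0 ≤ x i k := fun i => (hx i).1
  have hx1 : ∀ i, ∑ k, x i k = 1 := fun i => (hx i).2
  -- lower bound: any feasible plan costs at least the target
  have hlower : ∀ T : (Fin (d'+1) → Fin (n+1)) → ℝ, (∀ y, 0 ≤ T y) →
      (∀ (i : Fin (d'+1)) (j : Fin (n+1)),
        ∑ y ∈ Finset.univ.filter (fun y : Fin (d'+1) → Fin (n+1) => y i = j), T y = x i j) →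
      (∑ j ∈ Finset.Icc 1 n, Cmin (fun i => cdf (x i) j)) ≤
        ∑ y : Fin (d'+1) → Fin (n+1), Cmin (fun i => ((y i : ℕ) + 1 : ℝ)) * T y := by
    intro T hTnn hTmarg
    have hper : ∀ j : ℕ, Cmin (fun i => cdf (x i) j) ≤
        ∑ y : Fin (d'+1) → Fin (n+1), T y * Cmin (indf n (d'+1) j y) := by
      intro j
      have hV : (fun i : Fin (d'+1) => cdf (x i) j) =
          ∑ y : Fin (d'+1) → Fin (n+1), T y • indf n (d'+1) j y := by
        funext i
        rw [Finset.sum_apply]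
        have e1 : ∀ y : Fin (d'+1) → Fin (n+1),
            (T y • indf n (d'+1) j y) i = if (y i : ℕ) < j then T y else 0 := by
          intro y
          rw [Pi.smul_apply, smul_eq_mul]
          unfold indf
          split_ifs <;> ring
        rw [Finset.sum_congr rfl (fun y _ => e1 y),
          ← Finset.sum_fiberwise univ (fun y : Fin (d'+1) → Fin (n+1) => y i)
            (fun y => if (y i : ℕ) < j then T y else 0)]
        unfold cdf
        apply Finset.sum_congr rfl
        intro j' _
        have e2 : ∑ y ∈ univ.filter (fun y : Fin (d'+1) → Fin (n+1) => y i = j'),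
            (if ((y i:ℕ)) < j then T y else 0)
            = ∑ y ∈ univ.filter (fun y : Fin (d'+1) → Fin (n+1) => y i = j'),
              (if ((j':ℕ) < j) then T y else 0) := by
          apply Finset.sum_congr rfl
          intro y hy
          rw [mem_filter] at hy
          rw [hy.2]
        rw [e2]
        split_ifs with hc
        · exact (hTmarg i j').symm
        · exact Finset.sum_const_zero.symm
      calc Cmin (fun i : Fin (d'+1) => cdf (x i) j)
          = Cmin (∑ y : Fin (d'+1) → Fin (n+1), T y • indf n (d'+1) j y) := by rw [hV]
        _ ≤ ∑ y : Fin (d'+1) → Fin (n+1), Cmin (T y • indf n (d'+1) j y) := Cmin_sum_le _ _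
        _ ≤ ∑ y : Fin (d'+1) → Fin (n+1), T y * Cmin (indf n (d'+1) j y) :=
            Finset.sum_le_sum (fun y _ => Cmin_smul_le (T y) (hTnn y) _)
    calc ∑ j ∈ Finset.Icc 1 n, Cmin (fun i => cdf (x i) j)
        ≤ ∑ j ∈ Finset.Icc 1 n, ∑ y : Fin (d'+1) → Fin (n+1), T y * Cmin (indf n (d'+1) j y) :=
          Finset.sum_le_sum (fun j _ => hper j)
      _ = ∑ y : Fin (d'+1) → Fin (n+1), ∑ j ∈ Finset.Icc 1 n, T y * Cmin (indf n (d'+1) j y) :=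
          Finset.sum_comm
      _ = ∑ y : Fin (d'+1) → Fin (n+1), T y * ∑ j ∈ Finset.Icc 1 n, Cmin (indf n (d'+1) j y) := by
          apply Finset.sum_congr rfl
          intro y _
          rw [Finset.mul_sum]
      _ ≤ ∑ y : Fin (d'+1) → Fin (n+1), T y * Cmin (fun i => ((y i : ℕ) + 1 : ℝ)) :=
          Finset.sum_le_sum (fun y _ =>
            mul_le_mul_of_nonneg_left (cost_ge n (d'+1) y) (hTnn y))
      _ = ∑ y : Fin (d'+1) → Fin (n+1), Cmin (fun i => ((y i : ℕ) + 1 : ℝ)) * T y :=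
          Finset.sum_congr rfl (fun y _ => mul_comm _ _)
  -- upper bound: the comonotone coupling achieves the target
  have hupper : ∑ y : Fin (d'+1) → Fin (n+1), Cmin (fun i => ((y i : ℕ) + 1 : ℝ)) * Tstar n d' x y
      ≤ ∑ j ∈ Finset.Icc 1 n, Cmin (fun i => cdf (x i) j) := by
    calc ∑ y : Fin (d'+1) → Fin (n+1), Cmin (fun i => ((y i : ℕ) + 1 : ℝ)) * Tstar n d' x y
        ≤ ∑ y : Fin (d'+1) → Fin (n+1),
            (∑ j ∈ Finset.Icc 1 n, Cmin (indf n (d'+1) j y)) * Tstar n d' x y :=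
          Finset.sum_le_sum (fun y _ =>
            mul_le_mul_of_nonneg_right (cost_le n (d'+1) y) (Tstar_nonneg n d' x y))
      _ = ∑ y : Fin (d'+1) → Fin (n+1),
            ∑ j ∈ Finset.Icc 1 n, Cmin (indf n (d'+1) j y) * Tstar n d' x y := by
          apply Finset.sum_congr rfl
          intro y _
          rw [Finset.sum_mul]
      _ = ∑ j ∈ Finset.Icc 1 n,
            ∑ y : Fin (d'+1) → Fin (n+1), Cmin (indf n (d'+1) j y) * Tstar n d' x y :=
          Finset.sum_comm
      _ ≤ ∑ j ∈ Finset.Icc 1 n, Cmin (fun i => cdf (x i) j) :=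
          Finset.sum_le_sum (fun j hj => costJ n d' x hx0 hx1 j (mem_Icc.1 hj).2)
  have hmarg := Tstar_marg n d' x hx0 hx1
  have hval : (∑ j ∈ Finset.Icc 1 n, Cmin (fun i => cdf (x i) j)) =
      ∑ y : Fin (d'+1) → Fin (n+1), Cmin (fun i => ((y i : ℕ) + 1 : ℝ)) * Tstar n d' x y :=
    le_antisymm (hlower (Tstar n d' x) (Tstar_nonneg n d' x) hmarg) hupper
  constructor
  · exact ⟨Tstar n d' x, Tstar_nonneg n d' x, hmarg, hval⟩
  · rintro s ⟨T, h1, h2, rfl⟩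
    exact hlower T h1 h2
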